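/- Let $X$ be a quandle containing a trivial subquandle $Y$ of order at least two. Then for any $n \geq 2$, any distinct elements $y_1, \ldots, y_n \in Y$, and any coefficients $\alpha_1, \ldots, \alpha_n \in \mathbf{k}$ with $\sum_{i=1}^n \alpha_i = 1$, the element $u = \sum_{i=1}^n \alpha_i e_{y_i}$ is an idempotent of the quandle ring $\mathbf{k}[X]$. In particular, $\mathbf{k}[X]$ has non-trivial idempotents. -/

import Mathlib

/-- A quandle with the paper's (right-multiplication) convention:
`x * y = S_y(x)`, each `S_y` is an automorphism of the quandle fixing `y`. -/
class Quandle' (Q : Type*) extends Mul Q where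
  invMul : Q → Q → Q
  rightDist : ∀ x y z : Q, (x * y) * z = (x * z) * (y * z)
  invMul_mul : ∀ x y : Q, invMul (x * y) y = x
  mul_invMul : ∀ x y : Q, (invMul x y) * y = x
  mul_self : ∀ x : Q, x * x = x

lemma idem_aux {Q : Type*} [Quandle' Q] (k : Type*) [CommRing k]
    (n : ℕ) (y : Fin n → Q)
    (htriv : ∀ i j : Fin n, y i * y j = y i)
    (α : Fin n → k) (hα : ∑ i, α i = 1) :
    (∑ i, α i • (MonoidAlgebra.single (y i) (1 : k) : MonoidAlgebra k Q)) *
        (∑ i, α i • (MonoidAlgebra.single (y i) (1 : k) : MonoidAlgebra k Q)) =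
      ∑ i, α i • (MonoidAlgebra.single (y i) (1 : k) : MonoidAlgebra k Q) := by
  rw [Finset.sum_mul_sum]
  refine Finset.sum_congr rfl fun i _ => ?_
  have : ∀ j : Fin n, (α i • (MonoidAlgebra.single (y i) (1 : k) : MonoidAlgebra k Q)) *
      (α j • MonoidAlgebra.single (y j) 1) = (α i * α j) • MonoidAlgebra.single (y i) 1 := by
    intro j
    rw [smul_mul_smul_comm, MonoidAlgebra.single_mul_single, htriv, one_mul]
  simp_rw [this, ← Finset.sum_smul, ← Finset.mul_sum, hα, mul_one]

/-- If a quandle has a trivial subquandle with at least two elements, then any combination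
`∑ αᵢ e_{yᵢ}` with `∑ αᵢ = 1` of distinct elements of it is an idempotent of `k[X]`;
in particular `k[X]` has non-trivial idempotents. -/
theorem stmt4 {Q : Type*} [Quandle' Q] (k : Type*) [CommRing k] [IsDomain k]
    (hk : ∃ a : k, a ≠ 0 ∧ a ≠ 1)
    (n : ℕ) (hn : 2 ≤ n) (y : Fin n → Q) (hy : Function.Injective y)
    (htriv : ∀ i j : Fin n, y i * y j = y i)
    (α : Fin n → k) (hα : ∑ i, α i = 1) :
    (∑ i, α i • (MonoidAlgebra.single (y i) (1 : k) : MonoidAlgebra k Q)) *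
        (∑ i, α i • (MonoidAlgebra.single (y i) (1 : k) : MonoidAlgebra k Q)) =
      ∑ i, α i • (MonoidAlgebra.single (y i) (1 : k) : MonoidAlgebra k Q) ∧
    ∃ u : MonoidAlgebra k Q, u * u = u ∧ u ≠ 0 ∧ ∀ x : Q, u ≠ MonoidAlgebra.single x (1 : k) := by
  refine ⟨idem_aux k n y htriv α hα, ?_⟩
  obtain ⟨a, ha0, ha1⟩ := hk
  set i0 : Fin n := ⟨0, by omega⟩
  set i1 : Fin n := ⟨1, by omega⟩
  have hne : y i0 ≠ y i1 := fun h => by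
    have := hy h
    simp [i0, i1, Fin.ext_iff] at this
  set u : MonoidAlgebra k Q :=
    a • MonoidAlgebra.single (y i0) 1 + (1 - a) • MonoidAlgebra.single (y i1) 1 with hu
  have hidem := idem_aux k 2 ![y i0, y i1]
    (by intro i j; fin_cases i <;> fin_cases j <;> simp [htriv])
    ![a, 1 - a] (by simp [Fin.sum_univ_two])
  rw [Fin.sum_univ_two] at hidem
  simp only [Matrix.cons_val_zero, Matrix.cons_val_one, Matrix.head_cons] at hidem
  have key : (u : MonoidAlgebra k Q).coeff (y i0) = a := by
    classical
    rw [hu]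
    rw [MonoidAlgebra.coeff_add, Finsupp.add_apply, MonoidAlgebra.coeff_smul_apply, MonoidAlgebra.coeff_smul_apply]
    rw [MonoidAlgebra.coeff_single, MonoidAlgebra.coeff_single, Finsupp.single_eq_same, Finsupp.single_eq_of_ne' hne.symm]
    simp
  refine ⟨u, hidem, ?_, ?_⟩
  · intro h
    rw [h] at key
    simp at key
    exact ha0 key.symm
  · intro x h
    have h0 : (MonoidAlgebra.single x (1:k) : MonoidAlgebra k Q).coeff (y i0) = a := by rw [← h]; exact key
    classical
    rw [MonoidAlgebra.coeff_single, Finsupp.single_apply] at h0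
    by_cases hx : x = y i0
    · rw [if_pos hx] at h0; exact ha1 h0.symm
    · rw [if_neg hx] at h0; exact ha0 h0.symm
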